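/- Hyperbolicity cones are convex cones: if h is hyperbolic with respect to e, then the set Λ(h,e) = {v ∈ ℝⁿ : no root of t ↦ h(te+v) is strictly positive} is a convex cone. -/

import Mathlib

open MvPolynomial Polynomial Matrix

noncomputable def univPoly {n : ℕ} (h : MvPolynomial (Fin n) ℝ) (e v : Fin n → ℝ) : Polynomial ℝ :=
  MvPolynomial.aeval (fun i => Polynomial.C (v i) + Polynomial.C (e i) * Polynomial.X) h

def RealRooted (p : Polynomial ℝ) : Prop :=
  ∀ z : ℂ, (p.map (algebraMap ℝ ℂ)).IsRoot z → z.im = 0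

def Hyperbolic {n : ℕ} (h : MvPolynomial (Fin n) ℝ) (e : Fin n → ℝ) : Prop :=
  MvPolynomial.eval e h ≠ 0 ∧ ∀ v : Fin n → ℝ, RealRooted (univPoly h e v)

def hypCone {n : ℕ} (h : MvPolynomial (Fin n) ℝ) (e : Fin n → ℝ) : Set (Fin n → ℝ) :=
  {v | ∀ t : ℝ, (univPoly h e v).IsRoot t → t ≤ 0}

set_option maxHeartbeats 1000000

open Complex Filter Topology Bornology

noncomputable section GardingAux

open Complex Filter Topology

/-- evaluation of the linear-substitution univariate polynomial -/
lemma aeval_lin_eval {n : ℕ} {R : Type*} [CommSemiring R] (H : MvPolynomial (Fin n) R)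
    (a b : Fin n → R) (τ : R) :
    (MvPolynomial.aeval (fun j => Polynomial.C (a j) + Polynomial.C (b j) * Polynomial.X) H).eval τ
      = MvPolynomial.eval (fun j => a j + b j * τ) H := by
  induction H using MvPolynomial.induction_on with
  | C c => simp
  | add p q hp hq => simp [hp, hq]
  | mul_X p j hp => simp [hp]

lemma map_aeval_lin {n : ℕ} (H : MvPolynomial (Fin n) ℝ) (a b : Fin n → ℝ) :
    (MvPolynomial.aeval (fun j => Polynomial.C (a j) + Polynomial.C (b j) * Polynomial.X) H).map
        (algebraMap ℝ ℂ)
      = MvPolynomial.aeval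
          (fun j => Polynomial.C ((a j : ℂ)) + Polynomial.C ((b j : ℂ)) * Polynomial.X)
          (MvPolynomial.map (algebraMap ℝ ℂ) H) := by
  induction H using MvPolynomial.induction_on with
  | C c => simp [Polynomial.map_C]
  | add p q hp hq => simp [Polynomial.map_add, hp, hq]
  | mul_X p j hp => simp [Polynomial.map_mul, Polynomial.map_add, hp]

lemma eval_conj {n : ℕ} (H : MvPolynomial (Fin n) ℝ) (z : Fin n → ℂ) :
    MvPolynomial.eval (fun j => (starRingEnd ℂ) (z j)) (MvPolynomial.map (algebraMap ℝ ℂ) H)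
      = (starRingEnd ℂ) (MvPolynomial.eval z (MvPolynomial.map (algebraMap ℝ ℂ) H)) := by
  induction H using MvPolynomial.induction_on with
  | C c => simp [Complex.conj_ofReal]
  | add p q hp hq => simp [hp, hq]
  | mul_X p j hp => simp [hp]

lemma continuous_mv_eval {n : ℕ} (H : MvPolynomial (Fin n) ℂ) :
    Continuous fun z : Fin n → ℂ => MvPolynomial.eval z H := by
  induction H using MvPolynomial.induction_on with
  | C c => simpa using continuous_const
  | add p q hp hq => simpa [Pi.add_def] using hp.add hq
  | mul_X p j hp => simpa [Pi.mul_def] using hp.mul (continuous_apply j)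

lemma continuous_lin_coeff {n : ℕ} (H : MvPolynomial (Fin n) ℂ) (m : ℕ) :
    Continuous fun ab : (Fin n → ℂ) × (Fin n → ℂ) =>
      (MvPolynomial.aeval
        (fun j => Polynomial.C (ab.1 j) + Polynomial.C (ab.2 j) * Polynomial.X) H).coeff m := by
  induction H using MvPolynomial.induction_on generalizing m with
  | C c =>
    have key : ∀ ab : (Fin n → ℂ) × (Fin n → ℂ),
        (MvPolynomial.aeval
          (fun j => Polynomial.C (ab.1 j) + Polynomial.C (ab.2 j) * Polynomial.X)
          (MvPolynomial.C c : MvPolynomial (Fin n) ℂ)).coeff m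
          = if m = 0 then c else 0 := by
      intro ab
      simp [Polynomial.coeff_C]
    simp only [key]
    exact continuous_const
  | add p q hp hq =>
    simpa only [map_add, Polynomial.coeff_add, Pi.add_def] using (hp m).add (hq m)
  | mul_X p j hp =>
    have key : ∀ ab : (Fin n → ℂ) × (Fin n → ℂ),
        (MvPolynomial.aeval
          (fun j => Polynomial.C (ab.1 j) + Polynomial.C (ab.2 j) * Polynomial.X)
          (p * MvPolynomial.X j)).coeff m
          = (MvPolynomial.aeval
              (fun j => Polynomial.C (ab.1 j) + Polynomial.C (ab.2 j) * Polynomial.X) p).coeff m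
                * ab.1 j
            + (if m = 0 then 0 else
              (MvPolynomial.aeval
                (fun j => Polynomial.C (ab.1 j) + Polynomial.C (ab.2 j) * Polynomial.X) p).coeff
                (m - 1) * ab.2 j) := by
      intro ab
      rw [_root_.map_mul, MvPolynomial.aeval_X, mul_add, ← mul_assoc, Polynomial.coeff_add,
        Polynomial.coeff_mul_C]
      congr 1
      rcases m with _ | m
      · simp [Polynomial.coeff_mul_X_zero]
      · simp [Polynomial.coeff_mul_X, Polynomial.coeff_mul_C]
    simp only [key]
    rcases m with _ | m
    · simpa [Pi.mul_def, Function.comp_def] using (hp 0).mul ((continuous_apply j).comp continuous_fst)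
    · simp only [Nat.succ_ne_zero, if_neg, not_false_iff, Nat.succ_sub_one]
      exact ((hp (m+1)).mul ((continuous_apply j).comp continuous_fst)).add
        ((hp m).mul ((continuous_apply j).comp continuous_snd))

/-- coefficient of a finite product at the sum of degree bounds -/
lemma coeff_prod_top {R : Type*} [CommRing R] [NoZeroDivisors R] {ι : Type*} (s : Finset ι)
    (f : ι → Polynomial R) (δ : ι → ℕ) (hf : ∀ i ∈ s, (f i).natDegree ≤ δ i) :
    (∏ i ∈ s, f i).coeff (∑ i ∈ s, δ i) = ∏ i ∈ s, (f i).coeff (δ i) := by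
  classical
  induction s using Finset.induction_on with
  | empty => simp
  | insert x s hx ih =>
    rw [Finset.prod_insert hx, Finset.sum_insert hx, Finset.prod_insert hx,
      Polynomial.coeff_mul_add_eq_of_natDegree_le (hf x (Finset.mem_insert_self x s))
        ((Polynomial.natDegree_prod_le _ _).trans (Finset.sum_le_sum fun i hi =>
          hf i (Finset.mem_insert_of_mem hi))),
      ih fun i hi => hf i (Finset.mem_insert_of_mem hi)]

end GardingAux

noncomputable section G2
variable {n d : ℕ}

lemma degsum {h : MvPolynomial (Fin n) ℝ} (hhom : h.IsHomogeneous d) {α : Fin n →₀ ℕ}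
    (hα : MvPolynomial.coeff α h ≠ 0) : ∑ j, α j = d := by
  have h1 : (Finsupp.weight 1) α = d := hhom hα
  change Finsupp.weight (fun _ => 1) α = d at h1
  rw [← Finsupp.degree_eq_weight_one] at h1
  rw [← h1, Finsupp.degree]
  exact (Finset.sum_subset (Finset.subset_univ _) (by
    intro x _ hx
    simpa using Finsupp.notMem_support_iff.mp hx)).symm

lemma coeff_map_ne {h : MvPolynomial (Fin n) ℝ} {α : Fin n →₀ ℕ}
    (hα : MvPolynomial.coeff α (MvPolynomial.map (algebraMap ℝ ℂ) h) ≠ 0) :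
    MvPolynomial.coeff α h ≠ 0 := by
  intro h0
  rw [MvPolynomial.coeff_map, h0] at hα
  simp at hα

/-- homogeneous scaling over ℝ -/
lemma hom_eval_smul {h : MvPolynomial (Fin n) ℝ} (hhom : h.IsHomogeneous d) (c : ℝ)
    (x : Fin n → ℝ) :
    MvPolynomial.eval (fun j => c * x j) h = c ^ d * MvPolynomial.eval x h := by
  rw [MvPolynomial.eval_eq', MvPolynomial.eval_eq', Finset.mul_sum]
  apply Finset.sum_congr rfl
  intro α hα
  have hd : ∑ j, α j = d := degsum hhom (MvPolynomial.mem_support_iff.mp hα)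
  rw [← hd]
  simp only [mul_pow, Finset.prod_mul_distrib, Finset.prod_pow_eq_pow_sum]
  ring

/-- natDegree bound for the substituted polynomial -/
lemma QP_natDegree_le {h : MvPolynomial (Fin n) ℝ} (hhom : h.IsHomogeneous d) (a b : Fin n → ℂ) :
    (MvPolynomial.aeval (fun j => Polynomial.C (a j) + Polynomial.C (b j) * Polynomial.X)
      (MvPolynomial.map (algebraMap ℝ ℂ) h)).natDegree ≤ d := by
  set H := MvPolynomial.map (algebraMap ℝ ℂ) h with hH
  conv_lhs => rw [← MvPolynomial.support_sum_monomial_coeff H]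
  rw [map_sum]
  apply Polynomial.natDegree_sum_le_of_forall_le
  intro α hα
  rw [MvPolynomial.aeval_monomial]
  apply (Polynomial.natDegree_mul_le).trans
  have h1 : (algebraMap ℂ ℂ[X]) (MvPolynomial.coeff α H) = Polynomial.C (MvPolynomial.coeff α H) := rfl
  rw [h1, Polynomial.natDegree_C, zero_add]
  have h2 : (α.prod fun j k => (Polynomial.C (a j) + Polynomial.C (b j) * Polynomial.X) ^ k)
      = ∏ j, (Polynomial.C (a j) + Polynomial.C (b j) * Polynomial.X) ^ (α j) :=
    Finsupp.prod_fintype _ _ (fun j => pow_zero _)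
  rw [h2]
  apply (Polynomial.natDegree_prod_le _ _).trans
  have h3 : ∀ j : Fin n,
      ((Polynomial.C (a j) + Polynomial.C (b j) * Polynomial.X) ^ (α j)).natDegree ≤ α j := by
    intro j
    apply (Polynomial.natDegree_pow_le).trans
    have : (Polynomial.C (a j) + Polynomial.C (b j) * Polynomial.X).natDegree ≤ 1 := by
      apply (Polynomial.natDegree_add_le _ _).trans
      simp [Polynomial.natDegree_C]
      exact (Polynomial.natDegree_mul_le).trans (by simp)
    calc α j * (Polynomial.C (a j) + Polynomial.C (b j) * Polynomial.X).natDegree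
        ≤ α j * 1 := Nat.mul_le_mul_left _ this
      _ = α j := mul_one _
  apply (Finset.sum_le_sum fun j _ => h3 j).trans
  rw [degsum hhom (coeff_map_ne (MvPolynomial.mem_support_iff.mp hα))]

lemma QP_coeff_top {h : MvPolynomial (Fin n) ℝ} (hhom : h.IsHomogeneous d) (a b : Fin n → ℂ) :
    (MvPolynomial.aeval (fun j => Polynomial.C (a j) + Polynomial.C (b j) * Polynomial.X)
      (MvPolynomial.map (algebraMap ℝ ℂ) h)).coeff d
      = MvPolynomial.eval b (MvPolynomial.map (algebraMap ℝ ℂ) h) := by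
  set H := MvPolynomial.map (algebraMap ℝ ℂ) h with hH
  conv_lhs => rw [← MvPolynomial.support_sum_monomial_coeff H]
  rw [map_sum, Polynomial.finset_sum_coeff, MvPolynomial.eval_eq']
  apply Finset.sum_congr rfl
  intro α hα
  have hd : ∑ j, α j = d := degsum hhom (coeff_map_ne (MvPolynomial.mem_support_iff.mp hα))
  rw [MvPolynomial.aeval_monomial]
  have h1 : (algebraMap ℂ ℂ[X]) (MvPolynomial.coeff α H) = Polynomial.C (MvPolynomial.coeff α H) := rfl
  have h2 : (α.prod fun j k => (Polynomial.C (a j) + Polynomial.C (b j) * Polynomial.X) ^ k)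
      = ∏ j, (Polynomial.C (a j) + Polynomial.C (b j) * Polynomial.X) ^ (α j) :=
    Finsupp.prod_fintype _ _ (fun j => pow_zero _)
  rw [h1, h2, ← hd, Polynomial.coeff_C_mul]
  congr 1
  have h3 : ∀ j : Fin n,
      ((Polynomial.C (a j) + Polynomial.C (b j) * Polynomial.X) ^ (α j)).coeff (α j)
        = b j ^ (α j) := by
    intro j
    have hb : (Polynomial.C (a j) + Polynomial.C (b j) * Polynomial.X).natDegree ≤ 1 := by
      apply (Polynomial.natDegree_add_le _ _).trans
      simp [Polynomial.natDegree_C]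
      exact (Polynomial.natDegree_mul_le).trans (by simp)
    have := Polynomial.coeff_pow_of_natDegree_le (m := α j) hb
    rw [mul_one] at this
    rw [this]
    simp
  rw [coeff_prod_top Finset.univ _ (fun j => α j) ?_]
  · exact Finset.prod_congr rfl fun j _ => h3 j
  · intro j _
    apply (Polynomial.natDegree_pow_le).trans
    have hb : (Polynomial.C (a j) + Polynomial.C (b j) * Polynomial.X).natDegree ≤ 1 := by
      apply (Polynomial.natDegree_add_le _ _).trans
      simp [Polynomial.natDegree_C]
      exact (Polynomial.natDegree_mul_le).trans (by simp)
    calc α j * _ ≤ α j * 1 := Nat.mul_le_mul_left _ hb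
      _ = α j := mul_one _

/-- Cauchy-type root bound -/
lemma root_bound {p : ℂ[X]} {d : ℕ} (hdeg : p.natDegree ≤ d) (hc : p.coeff d ≠ 0) {z : ℂ}
    (hz : p.eval z = 0) :
    ‖z‖ ≤ max 1 ((∑ j ∈ Finset.range d, ‖p.coeff j‖) / ‖p.coeff d‖) := by
  rcases le_or_gt ‖z‖ 1 with h1 | h1
  · exact le_max_of_le_left h1
  apply le_max_of_le_right
  rcases Nat.eq_zero_or_pos d with rfl | hd
  · exfalso
    apply hc
    have : p = Polynomial.C (p.coeff 0) := Polynomial.eq_C_of_natDegree_le_zero hdeg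
    rw [this] at hz
    simpa using hz
  have heval : (∑ j ∈ Finset.range (d + 1), p.coeff j * z ^ j) = 0 := by
    rw [← Polynomial.eval_eq_sum_range' (Nat.lt_succ_of_le hdeg)]
    exact hz
  rw [Finset.sum_range_succ] at heval
  have hmain : p.coeff d * z ^ d = -∑ j ∈ Finset.range d, p.coeff j * z ^ j := by
    linear_combination heval
  have hnorm : ‖p.coeff d‖ * ‖z‖ ^ d ≤ (∑ j ∈ Finset.range d, ‖p.coeff j‖) * ‖z‖ ^ (d - 1) := by
    calc ‖p.coeff d‖ * ‖z‖ ^ d = ‖p.coeff d * z ^ d‖ := by rw [norm_mul, norm_pow]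
      _ = ‖∑ j ∈ Finset.range d, p.coeff j * z ^ j‖ := by rw [hmain, norm_neg]
      _ ≤ ∑ j ∈ Finset.range d, ‖p.coeff j * z ^ j‖ := norm_sum_le _ _
      _ ≤ ∑ j ∈ Finset.range d, ‖p.coeff j‖ * ‖z‖ ^ (d - 1) := by
          apply Finset.sum_le_sum
          intro j hj
          rw [norm_mul, norm_pow]
          apply mul_le_mul_of_nonneg_left _ (norm_nonneg _)
          exact pow_le_pow_right₀ h1.le (Nat.le_sub_one_of_lt (Finset.mem_range.mp hj))
      _ = (∑ j ∈ Finset.range d, ‖p.coeff j‖) * ‖z‖ ^ (d - 1) := by rw [Finset.sum_mul]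
  have hzpos : (0:ℝ) < ‖z‖ ^ (d - 1) := pow_pos (lt_trans zero_lt_one h1) _
  have hcpos : (0:ℝ) < ‖p.coeff d‖ := norm_pos_iff.mpr hc
  rw [le_div_iff₀ hcpos]
  have hzd : ‖z‖ ^ d = ‖z‖ ^ (d - 1) * ‖z‖ := by
    rw [← pow_succ]
    congr 1
    omega
  rw [hzd] at hnorm
  have h4 : (‖z‖ * ‖p.coeff d‖) * ‖z‖ ^ (d - 1) ≤ (∑ j ∈ Finset.range d, ‖p.coeff j‖) * ‖z‖ ^ (d - 1) := by
    nlinarith [hnorm]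
  exact le_of_mul_le_mul_right h4 hzpos

end G2

noncomputable section G3

lemma tendsto_eval_of_coeff {p : ℕ → ℂ[X]} {q : ℂ[X]} {d : ℕ}
    (hdeg : ∀ k, (p k).natDegree ≤ d) (hqdeg : q.natDegree ≤ d)
    (hconv : ∀ j, Tendsto (fun k => (p k).coeff j) atTop (𝓝 (q.coeff j)))
    {τ : ℕ → ℂ} {t : ℂ} (hτ : Tendsto τ atTop (𝓝 t)) :
    Tendsto (fun k => (p k).eval (τ k)) atTop (𝓝 (q.eval t)) := by
  have h1 : ∀ k, (p k).eval (τ k) = ∑ j ∈ Finset.range (d+1), (p k).coeff j * (τ k)^j :=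
    fun k => Polynomial.eval_eq_sum_range' (Nat.lt_succ_of_le (hdeg k)) _
  have h2 : q.eval t = ∑ j ∈ Finset.range (d+1), q.coeff j * t^j :=
    Polynomial.eval_eq_sum_range' (Nat.lt_succ_of_le hqdeg) _
  simp only [h1, h2]
  exact tendsto_finset_sum _ fun j _ => ((hconv j).mul (hτ.pow j))

/-- uniform bound on roots of the sequence -/
lemma uniform_root_bound {d : ℕ} {p : ℕ → ℂ[X]} {q : ℂ[X]}
    (hdeg : ∀ k, (p k).natDegree ≤ d)
    (hlead : ∀ k, (p k).coeff d ≠ 0) (hqlead : q.coeff d ≠ 0)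
    (hconv : ∀ j, Tendsto (fun k => (p k).coeff j) atTop (𝓝 (q.coeff j))) :
    ∃ R : ℝ, 0 ≤ R ∧ ∀ k z, (p k).eval z = 0 → ‖z‖ ≤ R := by
  set R : ℕ → ℝ := fun k => max 1 ((∑ j ∈ Finset.range d, ‖(p k).coeff j‖) / ‖(p k).coeff d‖)
    with hR
  have hRt : Tendsto R atTop
      (𝓝 (max 1 ((∑ j ∈ Finset.range d, ‖q.coeff j‖) / ‖q.coeff d‖))) := by
    apply Filter.Tendsto.max tendsto_const_nhds
    apply Filter.Tendsto.div
    · exact tendsto_finset_sum _ fun j _ => (hconv j).norm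
    · exact (hconv d).norm
    · simpa using hqlead
  obtain ⟨R₀, hR₀⟩ := hRt.bddAbove_range
  refine ⟨R₀, ?_, ?_⟩
  · have := hR₀ (Set.mem_range_self 0)
    have h1 : (1:ℝ) ≤ R 0 := le_max_left _ _
    linarith
  · intro k z hz
    exact (root_bound (hdeg k) (hlead k) hz).trans (hR₀ (Set.mem_range_self k))

lemma map_prod_fin {α M : Type*} [CommMonoid M] {d : ℕ} (l : List α) (hl : l.length = d)
    (g : α → M) :
    (l.map g).prod = ∏ j : Fin d, g (l.get (Fin.cast hl.symm j)) := by
  subst hl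
  conv_lhs => rw [← List.ofFn_get l, List.map_ofFn, List.prod_ofFn]
  exact Finset.prod_congr rfl fun j _ => by simp

lemma rootlim {d : ℕ} {p : ℕ → ℂ[X]} {q : ℂ[X]} {S : Set ℂ} (hS : IsClosed S)
    (hdeg : ∀ k, (p k).natDegree ≤ d) (hqdeg : q.natDegree ≤ d)
    (hlead : ∀ k, (p k).coeff d ≠ 0) (hqlead : q.coeff d ≠ 0)
    (hconv : ∀ j, Tendsto (fun k => (p k).coeff j) atTop (𝓝 (q.coeff j)))
    (hroots : ∀ k z, (p k).eval z = 0 → z ∈ S) :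
    ∀ z, q.eval z = 0 → z ∈ S := by
  classical
  have hdeq : ∀ k, (p k).natDegree = d :=
    fun k => le_antisymm (hdeg k) (Polynomial.le_natDegree_of_ne_zero (hlead k))
  have hcard : ∀ k, (p k).roots.card = d := by
    intro k
    rw [← hdeq k]
    exact (Polynomial.splits_iff_card_roots.mp (IsAlgClosed.splits _))
  have hlen : ∀ k, ((p k).roots.toList).length = d := by
    intro k; rw [Multiset.length_toList]; exact hcard k
  set z : ℕ → Fin d → ℂ := fun k j => ((p k).roots.toList).get (Fin.cast (hlen k).symm j) with hzdef
  have hzroot : ∀ k j, (p k).eval (z k j) = 0 := by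
    intro k j
    have hmem : z k j ∈ (p k).roots.toList := by simp only [hzdef]; exact List.get_mem _ _
    rw [Multiset.mem_toList] at hmem
    exact Polynomial.isRoot_of_mem_roots hmem
  have hfactor : ∀ k τ, (p k).eval τ = (p k).coeff d * ∏ j : Fin d, (τ - z k j) := by
    intro k τ
    have hsp : (p k) = Polynomial.C (p k).leadingCoeff *
        ((p k).roots.map fun a => Polynomial.X - Polynomial.C a).prod :=
      (IsAlgClosed.splits _).eq_prod_roots
    have hlc : (p k).leadingCoeff = (p k).coeff d := by
      rw [Polynomial.leadingCoeff, hdeq k]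
    conv_lhs => rw [hsp]
    rw [Polynomial.eval_mul, Polynomial.eval_C, hlc, Polynomial.eval_multiset_prod]
    congr 1
    rw [Multiset.map_map]
    have hcoe : (p k).roots = ((p k).roots.toList : Multiset ℂ) := (Multiset.coe_toList _).symm
    rw [hcoe, Multiset.map_coe, Multiset.prod_coe, map_prod_fin _ (hlen k)]
    exact Finset.prod_congr rfl fun j _ => by simp [hzdef]
  obtain ⟨R₀, hR₀nn, hR₀⟩ := uniform_root_bound hdeg hlead hqlead hconv
  have hball : ∀ k, z k ∈ Metric.closedBall (0 : Fin d → ℂ) R₀ := by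
    intro k
    rw [Metric.mem_closedBall, dist_zero_right]
    exact pi_norm_le_iff_of_nonneg hR₀nn |>.mpr fun j => hR₀ k _ (hzroot k j)
  obtain ⟨ζ, -, φ, hφ, hζ⟩ :=
    tendsto_subseq_of_bounded (Metric.isBounded_closedBall (x := (0 : Fin d → ℂ)) (r := R₀)) hball
  have hcoord : ∀ j, Tendsto (fun k => z (φ k) j) atTop (𝓝 (ζ j)) := by
    intro j
    exact (tendsto_pi_nhds.mp hζ) j
  have hζS : ∀ j, ζ j ∈ S := by
    intro j
    exact hS.mem_of_tendsto (hcoord j)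
      (Filter.Eventually.of_forall fun k => hroots _ _ (hzroot (φ k) j))
  have hid : ∀ t : ℂ, q.eval t = q.coeff d * ∏ j : Fin d, (t - ζ j) := by
    intro t
    have l1 : Tendsto (fun k => (p (φ k)).eval t) atTop (𝓝 (q.eval t)) :=
      tendsto_eval_of_coeff (fun k => hdeg (φ k)) hqdeg
        (fun j => (hconv j).comp hφ.tendsto_atTop) tendsto_const_nhds
    have l2 : Tendsto (fun k => (p (φ k)).eval t) atTop
        (𝓝 (q.coeff d * ∏ j : Fin d, (t - ζ j))) := by
      simp only [hfactor]
      exact ((hconv d).comp hφ.tendsto_atTop).mul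
        (tendsto_finset_prod _ fun j _ => tendsto_const_nhds.sub (hcoord j))
    exact tendsto_nhds_unique l1 l2
  intro t ht
  rw [hid t] at ht
  rcases mul_eq_zero.mp ht with hc | hprod
  · exact absurd hc hqlead
  · obtain ⟨j, -, hj⟩ := Finset.prod_eq_zero_iff.mp hprod
    have : t = ζ j := by linear_combination hj
    rw [this]; exact hζS j

lemma persist {d : ℕ} {p : ℕ → ℂ[X]} {q : ℂ[X]} {T : Set ℂ} (hT : IsClosed T)
    (hdeg : ∀ k, (p k).natDegree ≤ d) (hqdeg : q.natDegree ≤ d)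
    (hlead : ∀ k, (p k).coeff d ≠ 0) (hqlead : q.coeff d ≠ 0)
    (hconv : ∀ j, Tendsto (fun k => (p k).coeff j) atTop (𝓝 (q.coeff j)))
    (τ : ℕ → ℂ) (hτroot : ∀ k, (p k).eval (τ k) = 0) (hτT : ∀ k, τ k ∈ T) :
    ∃ t ∈ T, q.eval t = 0 := by
  obtain ⟨R₀, hR₀nn, hR₀⟩ := uniform_root_bound hdeg hlead hqlead hconv
  have hball : ∀ k, τ k ∈ Metric.closedBall (0 : ℂ) R₀ := by
    intro k
    rw [Metric.mem_closedBall, dist_zero_right]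
    exact hR₀ k _ (hτroot k)
  obtain ⟨t, -, φ, hφ, ht⟩ :=
    tendsto_subseq_of_bounded (Metric.isBounded_closedBall (x := (0 : ℂ)) (r := R₀)) hball
  refine ⟨t, hT.mem_of_tendsto ht (Filter.Eventually.of_forall fun k => hτT (φ k)), ?_⟩
  have l1 : Tendsto (fun k => (p (φ k)).eval (τ (φ k))) atTop (𝓝 (q.eval t)) :=
    tendsto_eval_of_coeff (fun k => hdeg (φ k)) hqdeg
      (fun j => (hconv j).comp hφ.tendsto_atTop) ht
  have l2 : Tendsto (fun k => (p (φ k)).eval (τ (φ k))) atTop (𝓝 0) := by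
    simp only [hτroot]
    exact tendsto_const_nhds
  exact tendsto_nhds_unique l1 l2

end G3

noncomputable section core
variable {n d : ℕ}

def EC (h : MvPolynomial (Fin n) ℝ) (z : Fin n → ℂ) : ℂ :=
  MvPolynomial.eval z (MvPolynomial.map (algebraMap ℝ ℂ) h)

def QPc (h : MvPolynomial (Fin n) ℝ) (a b : Fin n → ℂ) : ℂ[X] :=
  MvPolynomial.aeval (fun j => Polynomial.C (a j) + Polynomial.C (b j) * Polynomial.X)
    (MvPolynomial.map (algebraMap ℝ ℂ) h)

lemma QPc_eval (h : MvPolynomial (Fin n) ℝ) (a b : Fin n → ℂ) (τ : ℂ) :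
    (QPc h a b).eval τ = EC h (fun j => a j + b j * τ) := aeval_lin_eval _ _ _ _

lemma EC_real (h : MvPolynomial (Fin n) ℝ) (x : Fin n → ℝ) :
    EC h (fun j => (x j : ℂ)) = ((MvPolynomial.eval x h : ℝ) : ℂ) := by
  unfold EC
  induction h using MvPolynomial.induction_on with
  | C c => simp
  | add p q hp hq => simp [hp, hq]
  | mul_X p j hp => simp [hp]

lemma QPc_deg {h : MvPolynomial (Fin n) ℝ} (hhom : h.IsHomogeneous d) (a b : Fin n → ℂ) :
    (QPc h a b).natDegree ≤ d := QP_natDegree_le hhom a b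

lemma QPc_top {h : MvPolynomial (Fin n) ℝ} (hhom : h.IsHomogeneous d) (a b : Fin n → ℂ) :
    (QPc h a b).coeff d = EC h b := QP_coeff_top hhom a b

lemma QPc_coeff_cont (h : MvPolynomial (Fin n) ℝ) (m : ℕ) :
    Continuous fun ab : (Fin n → ℂ) × (Fin n → ℂ) => (QPc h ab.1 ab.2).coeff m :=
  continuous_lin_coeff _ m

/-- Lemma A: no zeros off the real axis in direction e -/
lemma lemA {h : MvPolynomial (Fin n) ℝ} {e : Fin n → ℝ} (hhyp : Hyperbolic h e)
    (y : Fin n → ℝ) {z : ℂ} (hz : z.im ≠ 0) :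
    EC h (fun j => (y j : ℂ) + (e j : ℂ) * z) ≠ 0 := by
  intro h0
  apply hz
  apply hhyp.2 y z
  show ((univPoly h e y).map (algebraMap ℝ ℂ)).eval z = 0
  rw [univPoly, map_aeval_lin, aeval_lin_eval]
  exact h0

/-- strict nonvanishing on the closed cone spanned by e and w -/
def Good (h : MvPolynomial (Fin n) ℝ) (e w : Fin n → ℝ) : Prop :=
  ∀ s t : ℝ, 0 ≤ s → 0 ≤ t → (s ≠ 0 ∨ t ≠ 0) →
    MvPolynomial.eval (fun j => s * e j + t * w j) h ≠ 0

lemma Good.comb {h : MvPolynomial (Fin n) ℝ} {e w : Fin n → ℝ} (hw : Good h e w)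
    {lam : ℝ} (h0 : 0 ≤ lam) (h1 : lam ≤ 1) :
    Good h e (fun j => (1 - lam) * e j + lam * w j) := by
  intro s t hs ht hst
  have : (fun j => s * e j + t * ((1 - lam) * e j + lam * w j))
      = fun j => (s + t * (1 - lam)) * e j + (t * lam) * w j := by
    funext j; ring
  rw [this]
  apply hw _ _ (by nlinarith) (by nlinarith)
  by_cases htl : t * lam = 0
  · left
    intro hzero
    have hs0 : s = 0 := by nlinarith
    have ht0 : t * (1 - lam) = 0 := by nlinarith
    rcases hst with hs' | ht'
    · exact hs' hs0
    · have hlam0 : lam = 0 := by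
        rcases mul_eq_zero.mp htl with h' | h'
        · exact absurd h' ht'
        · exact h'
      rw [hlam0] at ht0
      simp at ht0
      exact ht' ht0
  · right; exact htl

lemma Good.eval_ne {h : MvPolynomial (Fin n) ℝ} {e w : Fin n → ℝ} (hw : Good h e w) :
    MvPolynomial.eval w h ≠ 0 := by
  have := hw 0 1 le_rfl zero_le_one (Or.inr one_ne_zero)
  simpa using this

/-- Gårding's key lemma -/
lemma G1 {h : MvPolynomial (Fin n) ℝ} {e : Fin n → ℝ} (hhom : h.IsHomogeneous d)
    (hhyp : Hyperbolic h e) {w : Fin n → ℝ} (hw : Good h e w) (x : Fin n → ℝ) {s : ℝ}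
    (hs : 0 < s) :
    ∀ τ : ℂ, EC h (fun j => ((x j : ℂ) + Complex.I * s * e j) + (w j) * τ) = 0 → τ.im < 0 := by
  set a : Fin n → ℂ := fun j => (x j : ℂ) + Complex.I * s * e j with ha
  set b : ℝ → (Fin n → ℂ) := fun lam j => (((1 - lam) * e j + lam * w j : ℝ) : ℂ) with hb
  set P : ℝ → ℂ[X] := fun lam => QPc h a (b lam) with hP
  -- no real roots
  have noreal : ∀ lam : ℝ, lam ∈ Set.Icc (0:ℝ) 1 → ∀ τ : ℂ, τ.im = 0 →
      (P lam).eval τ ≠ 0 := by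
    intro lam _ τ him
    have hτ : τ = ((τ.re : ℝ) : ℂ) := Complex.ext rfl (by simpa using him)
    rw [hP, QPc_eval, hτ]
    have hvec : (fun j => a j + b lam j * ((τ.re : ℝ) : ℂ))
        = fun j => (((x j + τ.re * ((1 - lam) * e j + lam * w j) : ℝ)) : ℂ)
            + (e j : ℂ) * (Complex.I * s) := by
      funext j
      rw [ha, hb]
      push_cast
      ring
    rw [hvec]
    exact lemA hhyp _ (by simp [hs.ne'])
  -- leading coefficients
  have hlead : ∀ lam : ℝ, lam ∈ Set.Icc (0:ℝ) 1 → (P lam).coeff d ≠ 0 := by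
    intro lam hlam
    rw [hP, QPc_top hhom, hb, EC_real]
    exact_mod_cast (hw.comb hlam.1 hlam.2).eval_ne
  -- coefficient continuity in lam
  have hcont : ∀ m : ℕ, Continuous fun lam : ℝ => (P lam).coeff m := by
    intro m
    have hcomp : (fun lam : ℝ => (P lam).coeff m)
        = (fun ab : (Fin n → ℂ) × (Fin n → ℂ) => (QPc h ab.1 ab.2).coeff m)
          ∘ (fun lam : ℝ => (a, b lam)) := rfl
    rw [hcomp]
    apply (QPc_coeff_cont h m).comp
    apply Continuous.prodMk continuous_const
    apply continuous_pi
    intro j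
    exact Complex.continuous_ofReal.comp (by fun_prop)
  -- base case
  have base : ∀ τ : ℂ, (P 0).eval τ = 0 → τ.im < 0 := by
    intro τ h0
    rw [hP, QPc_eval] at h0
    have hvec : (fun j => a j + b 0 j * τ) = fun j => (x j : ℂ) + (e j : ℂ) * (τ + Complex.I * s) := by
      funext j
      rw [ha, hb]
      push_cast
      ring
    rw [hvec] at h0
    have him : (τ + Complex.I * s).im = 0 := by
      apply hhyp.2 x
      show ((univPoly h e x).map (algebraMap ℝ ℂ)).eval _ = 0
      rw [univPoly, map_aeval_lin, aeval_lin_eval]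
      exact h0
    simp at him
    linarith
  -- the two closed sets
  set A : Set ℝ := {lam | lam ∈ Set.Icc (0:ℝ) 1 ∧ ∀ τ : ℂ, (P lam).eval τ = 0 → τ.im < 0}
    with hA
  set B : Set ℝ := {lam | lam ∈ Set.Icc (0:ℝ) 1 ∧ ∃ τ : ℂ, (P lam).eval τ = 0 ∧ 0 < τ.im}
    with hB
  have hconv : ∀ (u : ℕ → ℝ) (l : ℝ), Filter.Tendsto u atTop (𝓝 l) →
      ∀ j, Filter.Tendsto (fun k => (P (u k)).coeff j) atTop (𝓝 ((P l).coeff j)) := by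
    intro u l hu j
    exact ((hcont j).tendsto l).comp hu
  have hAclosed : IsClosed A := by
    apply IsSeqClosed.isClosed
    intro u l hu hul
    have hlIcc : l ∈ Set.Icc (0:ℝ) 1 :=
      isClosed_Icc.mem_of_tendsto hul (Filter.Eventually.of_forall fun k => (hu k).1)
    refine ⟨hlIcc, ?_⟩
    intro τ hτ
    have hS : ∀ z : ℂ, (P l).eval z = 0 → z ∈ {z : ℂ | z.im ≤ 0} :=
      rootlim (d := d) (p := fun k => P (u k)) (q := P l) (S := {z : ℂ | z.im ≤ 0})
        (isClosed_le Complex.continuous_im continuous_const)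
        (fun k => QPc_deg hhom _ _) (QPc_deg hhom _ _)
        (fun k => hlead _ (hu k).1) (hlead _ hlIcc)
        (hconv u l hul) (fun k z hz => le_of_lt ((hu k).2 z hz))
    have h1 : τ.im ≤ 0 := hS τ hτ
    rcases lt_or_eq_of_le h1 with h2 | h2
    · exact h2
    · exact absurd hτ (noreal l hlIcc τ h2)
  have hBclosed : IsClosed B := by
    apply IsSeqClosed.isClosed
    intro u l hu hul
    have hlIcc : l ∈ Set.Icc (0:ℝ) 1 :=
      isClosed_Icc.mem_of_tendsto hul (Filter.Eventually.of_forall fun k => (hu k).1)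
    refine ⟨hlIcc, ?_⟩
    choose τ hτroot hτpos using fun k => (hu k).2
    obtain ⟨t, htT, htroot⟩ := persist (d := d) (p := fun k => P (u k)) (q := P l)
      (T := {z : ℂ | 0 ≤ z.im})
      (isClosed_le continuous_const Complex.continuous_im)
      (fun k => QPc_deg hhom _ _) (QPc_deg hhom _ _)
      (fun k => hlead _ (hu k).1) (hlead _ hlIcc)
      (hconv u l hul) τ hτroot (fun k => le_of_lt (hτpos k))
    refine ⟨t, htroot, ?_⟩
    have htT' : (0:ℝ) ≤ t.im := htT
    rcases lt_or_eq_of_le htT' with h2 | h2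
    · exact h2
    · exact absurd htroot (noreal l hlIcc t h2.symm)
  -- connectedness
  have hcover : Set.Icc (0:ℝ) 1 ⊆ A ∪ B := by
    intro lam hlam
    by_cases hall : ∀ τ : ℂ, (P lam).eval τ = 0 → τ.im < 0
    · exact Or.inl ⟨hlam, hall⟩
    · push_neg at hall
      obtain ⟨τ, hτroot, hτim⟩ := hall
      have : τ.im ≠ 0 := fun h0 => noreal lam hlam τ h0 hτroot
      exact Or.inr ⟨hlam, τ, hτroot, lt_of_le_of_ne hτim (Ne.symm this)⟩
  have hAne : (Set.Icc (0:ℝ) 1 ∩ A).Nonempty :=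
    ⟨0, Set.mem_Icc.mpr ⟨le_rfl, zero_le_one⟩, ⟨Set.mem_Icc.mpr ⟨le_rfl, zero_le_one⟩, base⟩⟩
  have hBempty : Set.Icc (0:ℝ) 1 ∩ B = ∅ := by
    by_contra hne
    obtain ⟨lam0, hlam0⟩ := Set.nonempty_iff_ne_empty.mpr hne
    have := (isPreconnected_closed_iff.mp isPreconnected_Icc) A B hAclosed hBclosed hcover
      hAne ⟨lam0, hlam0⟩
    obtain ⟨μ, -, hμA, hμB⟩ := this
    obtain ⟨τ, hτroot, hτpos⟩ := hμB.2
    exact absurd (hμA.2 τ hτroot) (by linarith)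
  -- conclude at lam = 1
  have h1A : (1:ℝ) ∈ A := by
    rcases hcover (Set.mem_Icc.mpr ⟨zero_le_one, le_rfl⟩) with hA1 | hB1
    · exact hA1
    · exact absurd (Set.mem_inter (Set.mem_Icc.mpr ⟨zero_le_one, le_rfl⟩) hB1)
        (by rw [hBempty]; exact Set.notMem_empty _)
  intro τ hτ
  apply h1A.2 τ
  rw [hP, QPc_eval]
  have hvec : (fun j => a j + b 1 j * τ) = fun j => ((x j : ℂ) + Complex.I * s * e j) + (w j) * τ := by
    funext j
    rw [ha, hb]
    push_cast
    ring
  rw [hvec]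
  exact hτ

lemma EC_real' {h : MvPolynomial (Fin n) ℝ} (u v : Fin n → ℝ) (r : ℝ) :
    EC h (fun j => (u j : ℂ) + (v j : ℂ) * (r : ℂ))
      = ((MvPolynomial.eval (fun j => u j + v j * r) h : ℝ) : ℂ) := by
  have hvec : (fun j => (u j : ℂ) + (v j : ℂ) * (r : ℂ)) = fun j => ((u j + v j * r : ℝ) : ℂ) := by
    funext j; push_cast; ring
  rw [hvec]
  exact EC_real h _

/-- hyperbolicity in direction w -/
lemma hypw {h : MvPolynomial (Fin n) ℝ} {e : Fin n → ℝ} (hhom : h.IsHomogeneous d)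
    (hhyp : Hyperbolic h e) {w : Fin n → ℝ} (hw : Good h e w) (x : Fin n → ℝ) :
    ∀ τ : ℂ, EC h (fun j => (x j : ℂ) + (w j) * τ) = 0 → τ.im = 0 := by
  have key : ∀ τ : ℂ, EC h (fun j => (x j : ℂ) + (w j) * τ) = 0 → τ.im ≤ 0 := by
    set cw : Fin n → ℂ := fun j => (w j : ℂ) with hcw
    set sk : ℕ → ℝ := fun k => 1 / (k + 1) with hsk
    set a : ℕ → (Fin n → ℂ) := fun k j => (x j : ℂ) + Complex.I * (sk k) * e j with ha
    set q : ℂ[X] := QPc h (fun j => (x j : ℂ)) cw with hq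
    have hsk_pos : ∀ k, 0 < sk k := by
      intro k; rw [hsk]; positivity
    have hsk_lim : Filter.Tendsto sk atTop (𝓝 0) := by
      rw [hsk]
      exact tendsto_one_div_add_atTop_nhds_zero_nat
    have halim : Filter.Tendsto (fun k => (a k, cw)) atTop
        (𝓝 ((fun j => (x j : ℂ)), cw)) := by
      apply Filter.Tendsto.prodMk_nhds _ tendsto_const_nhds
      rw [tendsto_pi_nhds]
      intro j
      have h1 : Filter.Tendsto (fun k => ((sk k : ℝ) : ℂ)) atTop (𝓝 (((0:ℝ) : ℂ))) :=
        (Complex.continuous_ofReal.tendsto _).comp hsk_lim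
      have h2 : Filter.Tendsto (fun k => (x j : ℂ) + Complex.I * ((sk k : ℝ):ℂ) * e j) atTop
          (𝓝 ((x j : ℂ) + Complex.I * ((0:ℝ):ℂ) * e j)) := by
        apply Filter.Tendsto.add tendsto_const_nhds
        exact (tendsto_const_nhds.mul h1).mul tendsto_const_nhds
      simpa using h2
    have hconv : ∀ j, Filter.Tendsto (fun k => (QPc h (a k) cw).coeff j) atTop
        (𝓝 (q.coeff j)) := by
      intro m
      have hcomp : (fun k => (QPc h (a k) cw).coeff m)
          = (fun ab : (Fin n → ℂ) × (Fin n → ℂ) => (QPc h ab.1 ab.2).coeff m)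
            ∘ (fun k => (a k, cw)) := rfl
      rw [hq, hcomp]
      have h5 : Filter.Tendsto
          (fun ab : (Fin n → ℂ) × (Fin n → ℂ) => (QPc h ab.1 ab.2).coeff m)
          (𝓝 ((fun j => (x j : ℂ)), cw))
          (𝓝 ((QPc h (fun j => (x j : ℂ)) cw).coeff m)) := by
        have h6 := (QPc_coeff_cont h m).tendsto ((fun j => (x j : ℂ)), cw)
        simpa using h6
      exact h5.comp halim
    have hleadk : ∀ k, (QPc h (a k) cw).coeff d ≠ 0 := by
      intro k
      rw [QPc_top hhom, hcw, EC_real]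
      exact_mod_cast hw.eval_ne
    have hleadq : q.coeff d ≠ 0 := by
      rw [hq, QPc_top hhom, hcw, EC_real]
      exact_mod_cast hw.eval_ne
    have hroots : ∀ k z, (QPc h (a k) cw).eval z = 0 → z ∈ {z : ℂ | z.im ≤ 0} := by
      intro k z hz
      rw [QPc_eval] at hz
      exact le_of_lt (G1 hhom hhyp hw x (hsk_pos k) z hz)
    have hS := rootlim (d := d) (p := fun k => QPc h (a k) cw) (q := q)
      (S := {z : ℂ | z.im ≤ 0})
      (isClosed_le Complex.continuous_im continuous_const)
      (fun k => QPc_deg hhom _ _) (QPc_deg hhom _ _) hleadk hleadq hconv hroots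
    intro τ hτ
    apply hS τ
    rw [hq, QPc_eval]
    exact hτ
  intro τ hτ
  have h1 : τ.im ≤ 0 := key τ hτ
  have hconj : EC h (fun j => (x j : ℂ) + (w j) * ((starRingEnd ℂ) τ)) = 0 := by
    have h2 : (fun j => (x j : ℂ) + (w j : ℂ) * ((starRingEnd ℂ) τ))
        = fun j => (starRingEnd ℂ) ((x j : ℂ) + (w j : ℂ) * τ) := by
      funext j
      simp [map_add, _root_.map_mul, Complex.conj_ofReal]
    show MvPolynomial.eval _ _ = (0:ℂ)
    rw [h2]
    rw [eval_conj h (fun j => (x j : ℂ) + (w j : ℂ) * τ)]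
    rw [show MvPolynomial.eval (fun j => (x j : ℂ) + (w j : ℂ) * τ)
        (MvPolynomial.map (algebraMap ℝ ℂ) h) = 0 from hτ]
    simp
  have h2 : ((starRingEnd ℂ) τ).im ≤ 0 := key _ hconj
  simp at h2
  linarith

/-- key additive nonvanishing -/
lemma main_add {h : MvPolynomial (Fin n) ℝ} {e : Fin n → ℝ} (hhom : h.IsHomogeneous d)
    (hhyp : Hyperbolic h e) {a b : Fin n → ℝ}
    (ha : ∀ s : ℝ, 0 ≤ s → MvPolynomial.eval (fun j => e j + s * a j) h ≠ 0)
    (hb : ∀ s : ℝ, 0 ≤ s → MvPolynomial.eval (fun j => e j + s * b j) h ≠ 0) :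
    MvPolynomial.eval (fun j => 2 * e j + a j + b j) h ≠ 0 := by
  set w : Fin n → ℝ := fun j => e j + a j with hwdef
  have hwgood : Good h e w := by
    intro s t hs ht hst
    have hc : 0 < s + t := by
      rcases (lt_or_eq_of_le (by linarith : (0:ℝ) ≤ s + t)) with h' | h'
      · exact h'
      · exfalso
        have hs0 : s = 0 := by linarith
        have ht0 : t = 0 := by linarith
        rcases hst with h'' | h'' <;> [exact h'' hs0; exact h'' ht0]
    have hvec : (fun j => s * e j + t * w j)
        = fun j => (s + t) * (e j + (t / (s + t)) * a j) := by
      funext j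
      rw [hwdef]
      field_simp
      ring
    rw [hvec, hom_eval_smul hhom]
    exact mul_ne_zero (pow_ne_zero _ hc.ne') (ha _ (div_nonneg ht hc.le))
  have hwreal := hypw hhom hhyp hwgood
  have hwne : MvPolynomial.eval w h ≠ 0 := hwgood.eval_ne
  set y : ℝ → (Fin n → ℝ) := fun μ j => e j + μ * b j with hy
  set P : ℝ → ℂ[X] := fun μ => QPc h (fun j => ((y μ j : ℝ) : ℂ)) (fun j => ((w j : ℝ) : ℂ))
    with hP
  have hPeval : ∀ μ τ, (P μ).eval τ = EC h (fun j => ((y μ j : ℝ) : ℂ) + (w j : ℂ) * τ) := by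
    intro μ τ
    rw [hP, QPc_eval]
  have hreal : ∀ μ : ℝ, ∀ τ : ℂ, (P μ).eval τ = 0 → τ.im = 0 := by
    intro μ τ hτ
    rw [hPeval] at hτ
    exact hwreal (y μ) τ hτ
  have hne0 : ∀ μ : ℝ, 0 ≤ μ → ∀ τ : ℂ, (P μ).eval τ = 0 → τ ≠ 0 := by
    intro μ hμ τ hτ h0
    rw [h0, hPeval] at hτ
    have hvec : (fun j => ((y μ j : ℝ) : ℂ) + (w j : ℂ) * (0:ℂ)) = fun j => ((y μ j : ℝ) : ℂ) := by
      funext j; ring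
    rw [hvec, EC_real] at hτ
    exact hb μ hμ (by exact_mod_cast hτ)
  have hrootreal : ∀ μ : ℝ, 0 ≤ μ → ∀ τ : ℂ, (P μ).eval τ = 0 →
      (MvPolynomial.eval (fun j => y μ j + w j * τ.re) h = 0 ∧ τ = ((τ.re : ℝ) : ℂ)) := by
    intro μ hμ τ hτ
    have him := hreal μ τ hτ
    have hτre : τ = ((τ.re : ℝ) : ℂ) := Complex.ext rfl (by simpa using him)
    constructor
    · rw [hPeval, hτre, EC_real'] at hτ
      exact_mod_cast hτ
    · exact hτre
  have hlead : ∀ μ : ℝ, (P μ).coeff d ≠ 0 := by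
    intro μ
    rw [hP, QPc_top hhom, EC_real]
    exact_mod_cast hwne
  have hcont : ∀ m : ℕ, Continuous fun μ : ℝ => (P μ).coeff m := by
    intro m
    have hcomp : (fun μ : ℝ => (P μ).coeff m)
        = (fun ab : (Fin n → ℂ) × (Fin n → ℂ) => (QPc h ab.1 ab.2).coeff m)
          ∘ (fun μ : ℝ => ((fun j => ((y μ j : ℝ) : ℂ)), (fun j => ((w j : ℝ) : ℂ)))) := rfl
    rw [hcomp]
    apply (QPc_coeff_cont h m).comp
    apply Continuous.prodMk _ continuous_const
    apply continuous_pi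
    intro j
    exact Complex.continuous_ofReal.comp (by rw [hy]; fun_prop)
  have hconv : ∀ (u : ℕ → ℝ) (l : ℝ), Filter.Tendsto u atTop (𝓝 l) →
      ∀ j, Filter.Tendsto (fun k => (P (u k)).coeff j) atTop (𝓝 ((P l).coeff j)) := by
    intro u l hu j
    exact ((hcont j).tendsto l).comp hu
  have base : ∀ τ : ℂ, (P 0).eval τ = 0 → τ.re < 0 := by
    intro τ hτ
    obtain ⟨hzero, hτre⟩ := hrootreal 0 le_rfl τ hτ
    by_contra hge
    push_neg at hge
    by_cases hr : τ.re = 0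
    · exact hne0 0 le_rfl τ hτ (by rw [hτre, hr]; simp)
    have hrpos : 0 < τ.re := lt_of_le_of_ne hge (Ne.symm hr)
    have h1r : (0:ℝ) < 1 + τ.re := by linarith
    have hvec : (fun j => y 0 j + w j * τ.re)
        = fun j => (1 + τ.re) * (e j + (τ.re / (1 + τ.re)) * a j) := by
      funext j
      rw [hy, hwdef]
      field_simp
      ring
    rw [hvec, hom_eval_smul hhom] at hzero
    exact (mul_ne_zero (pow_ne_zero _ h1r.ne') (ha _ (div_nonneg hrpos.le h1r.le))) hzero
  set A : Set ℝ := {μ | μ ∈ Set.Icc (0:ℝ) 1 ∧ ∀ τ : ℂ, (P μ).eval τ = 0 → τ.re < 0} with hA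
  set B : Set ℝ := {μ | μ ∈ Set.Icc (0:ℝ) 1 ∧ ∃ τ : ℂ, (P μ).eval τ = 0 ∧ 0 ≤ τ.re} with hB
  have hAclosed : IsClosed A := by
    apply IsSeqClosed.isClosed
    intro u l hu hul
    have hlIcc : l ∈ Set.Icc (0:ℝ) 1 :=
      isClosed_Icc.mem_of_tendsto hul (Filter.Eventually.of_forall fun k => (hu k).1)
    refine ⟨hlIcc, ?_⟩
    intro τ hτ
    have hS : ∀ z : ℂ, (P l).eval z = 0 → z ∈ {z : ℂ | z.re ≤ 0} :=
      rootlim (d := d) (p := fun k => P (u k)) (q := P l) (S := {z : ℂ | z.re ≤ 0})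
        (isClosed_le Complex.continuous_re continuous_const)
        (fun k => QPc_deg hhom _ _) (QPc_deg hhom _ _)
        (fun k => hlead _) (hlead _)
        (hconv u l hul) (fun k z hz => le_of_lt ((hu k).2 z hz))
    have h1 : τ.re ≤ 0 := hS τ hτ
    rcases lt_or_eq_of_le h1 with h2 | h2
    · exact h2
    · exfalso
      apply hne0 l hlIcc.1 τ hτ
      obtain ⟨-, hτre⟩ := hrootreal l hlIcc.1 τ hτ
      rw [hτre, h2]
      simp
  have hBclosed : IsClosed B := by
    apply IsSeqClosed.isClosed
    intro u l hu hul
    have hlIcc : l ∈ Set.Icc (0:ℝ) 1 :=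
      isClosed_Icc.mem_of_tendsto hul (Filter.Eventually.of_forall fun k => (hu k).1)
    refine ⟨hlIcc, ?_⟩
    choose τ hτroot hτpos using fun k => (hu k).2
    obtain ⟨t, htT, htroot⟩ := persist (d := d) (p := fun k => P (u k)) (q := P l)
      (T := {z : ℂ | 0 ≤ z.re})
      (isClosed_le continuous_const Complex.continuous_re)
      (fun k => QPc_deg hhom _ _) (QPc_deg hhom _ _)
      (fun k => hlead _) (hlead _)
      (hconv u l hul) τ hτroot (fun k => hτpos k)
    exact ⟨t, htroot, htT⟩
  have hcover : Set.Icc (0:ℝ) 1 ⊆ A ∪ B := by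
    intro μ hμ
    by_cases hall : ∀ τ : ℂ, (P μ).eval τ = 0 → τ.re < 0
    · exact Or.inl ⟨hμ, hall⟩
    · push_neg at hall
      obtain ⟨τ, hτroot, hτre⟩ := hall
      exact Or.inr ⟨hμ, τ, hτroot, hτre⟩
  have hAne : (Set.Icc (0:ℝ) 1 ∩ A).Nonempty :=
    ⟨0, Set.mem_Icc.mpr ⟨le_rfl, zero_le_one⟩, ⟨Set.mem_Icc.mpr ⟨le_rfl, zero_le_one⟩, base⟩⟩
  have hBempty : Set.Icc (0:ℝ) 1 ∩ B = ∅ := by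
    by_contra hne
    obtain ⟨μ0, hμ0⟩ := Set.nonempty_iff_ne_empty.mpr hne
    obtain ⟨μ, -, hμA, hμB⟩ := (isPreconnected_closed_iff.mp isPreconnected_Icc) A B hAclosed
      hBclosed hcover hAne ⟨μ0, hμ0⟩
    obtain ⟨τ, hτroot, hτre⟩ := hμB.2
    exact absurd (hμA.2 τ hτroot) (by linarith)
  have h1A : (1:ℝ) ∈ A := by
    rcases hcover (Set.mem_Icc.mpr ⟨zero_le_one, le_rfl⟩) with hA1 | hB1
    · exact hA1
    · exact absurd (Set.mem_inter (Set.mem_Icc.mpr ⟨zero_le_one, le_rfl⟩) hB1)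
        (by rw [hBempty]; exact Set.notMem_empty _)
  intro hzero
  have hroot1 : (P 1).eval 1 = 0 := by
    rw [hPeval]
    have hvec : (fun j => ((y 1 j : ℝ) : ℂ) + (w j : ℂ) * (1:ℂ))
        = fun j => ((2 * e j + a j + b j : ℝ) : ℂ) := by
      funext j
      rw [hy, hwdef]
      push_cast
      ring
    rw [hvec]
    rw [show (fun j => ((2 * e j + a j + b j : ℝ) : ℂ))
        = fun j => (((fun i => 2 * e i + a i + b i) j : ℝ) : ℂ) from rfl, EC_real]
    exact_mod_cast hzero
  have := h1A.2 1 hroot1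
  norm_num at this

end core

noncomputable section assemble
variable {n d : ℕ}

lemma char_cone {h : MvPolynomial (Fin n) ℝ} {e : Fin n → ℝ} (hhom : h.IsHomogeneous d)
    (hhyp : Hyperbolic h e) (v : Fin n → ℝ) :
    v ∈ hypCone h e ↔ ∀ s : ℝ, 0 ≤ s → MvPolynomial.eval (fun j => e j + s * v j) h ≠ 0 := by
  have hup : ∀ t : ℝ, (univPoly h e v).eval t
      = MvPolynomial.eval (fun j => v j + e j * t) h := by
    intro t; rw [univPoly, aeval_lin_eval]
  constructor
  · intro hv s hs h0
    rcases eq_or_lt_of_le hs with rfl | hs'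
    · apply hhyp.1
      have hvec : (fun j => e j + 0 * v j) = e := by funext j; ring
      rwa [hvec] at h0
    · have hroot : (univPoly h e v).IsRoot (1/s) := by
        show (univPoly h e v).eval (1/s) = 0
        rw [hup]
        have hvec : (fun j => v j + e j * (1/s)) = fun j => (1/s) * (e j + s * v j) := by
          funext j; field_simp; ring
        rw [hvec, hom_eval_smul hhom, h0, mul_zero]
      have hle := hv _ hroot
      have hgt : (0:ℝ) < 1/s := by positivity
      linarith
  · intro hv t hroot
    by_contra hpos
    push_neg at hpos
    have h0 : (univPoly h e v).eval t = 0 := hroot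
    rw [hup] at h0
    have hvec : (fun j => v j + e j * t) = fun j => t * (e j + (1/t) * v j) := by
      funext j; field_simp; ring
    rw [hvec, hom_eval_smul hhom] at h0
    rcases mul_eq_zero.mp h0 with h1 | h1
    · exact pow_ne_zero _ (ne_of_gt hpos) h1
    · exact hv (1/t) (by positivity) h1

theorem stmt5 {n d : ℕ} (h : MvPolynomial (Fin n) ℝ) (hhom : h.IsHomogeneous d)
    (e : Fin n → ℝ) (hhyp : Hyperbolic h e) :
    Convex ℝ (hypCone h e) ∧
      ∀ c : ℝ, 0 ≤ c → ∀ x ∈ hypCone h e, c • x ∈ hypCone h e := by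
  constructor
  · intro u hu v hv α β hα hβ hαβ
    rw [char_cone hhom hhyp] at hu hv ⊢
    intro s hs
    set a' : Fin n → ℝ := fun j => (2*s*α) * u j with ha'
    set b' : Fin n → ℝ := fun j => (2*s*β) * v j with hb'
    have hPa : ∀ r : ℝ, 0 ≤ r → MvPolynomial.eval (fun j => e j + r * a' j) h ≠ 0 := by
      intro r hr
      have : (fun j => e j + r * a' j) = fun j => e j + (r*(2*s*α)) * u j := by
        funext j; rw [ha']; ring
      rw [this]
      exact hu _ (by positivity)
    have hPb : ∀ r : ℝ, 0 ≤ r → MvPolynomial.eval (fun j => e j + r * b' j) h ≠ 0 := by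
      intro r hr
      have : (fun j => e j + r * b' j) = fun j => e j + (r*(2*s*β)) * v j := by
        funext j; rw [hb']; ring
      rw [this]
      exact hv _ (by positivity)
    have hmain := main_add hhom hhyp hPa hPb
    have hvec : (fun j => e j + s * (α • u + β • v) j)
        = fun j => (1/2) * (2 * e j + a' j + b' j) := by
      funext j
      rw [ha', hb']
      simp only [Pi.add_apply, Pi.smul_apply, smul_eq_mul]
      ring
    rw [hvec, hom_eval_smul hhom]
    exact mul_ne_zero (pow_ne_zero _ (by norm_num)) hmain
  · intro c hc x hx
    rw [char_cone hhom hhyp] at hx ⊢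
    intro s hs
    have hvec : (fun j => e j + s * (c • x) j) = fun j => e j + (s*c) * x j := by
      funext j
      simp only [Pi.smul_apply, smul_eq_mul]
      ring
    rw [hvec]
    exact hx _ (by positivity)

end assemble
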